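/- For any real c ≠ 0, let γ̄ = 1/√(1 + c²). Then the function u(x,t) = 4·arctan(c^{−1}·sin(γ̄ c t)·sech(γ̄ x)) satisfies the sine-Gordon equation ∂²u/∂t² = ∂²u/∂x² − sin(u) for all real x and t. -/

import Mathlib

open Real

lemma sin_four_arctan (a : ℝ) :
    Real.sin (4 * Real.arctan a) = 4 * a * (1 - a ^ 2) / (1 + a ^ 2) ^ 2 := by
  have h1 : (0:ℝ) < 1 + a ^ 2 := by positivity
  have hs : Real.sqrt (1 + a ^ 2) ^ 2 = 1 + a ^ 2 := Real.sq_sqrt h1.le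
  have hne : Real.sqrt (1 + a ^ 2) ≠ 0 := by positivity
  have h4 : (4:ℝ) * Real.arctan a = 2 * (2 * Real.arctan a) := by ring
  rw [h4, Real.sin_two_mul, Real.sin_two_mul, Real.cos_two_mul, Real.sin_arctan,
    Real.cos_arctan]
  field_simp
  linear_combination ((-4*a-8*a^3-4*a^5) + (-4*a+4*a^3)*(Real.sqrt (1+a^2)^2 + 1 + a^2)) * hs

theorem sine_gordon_breather_solution
    (c : ℝ) (hc : c ≠ 0) (γ : ℝ) (hγ : γ = 1 / Real.sqrt (1 + c ^ 2))
    (u : ℝ → ℝ → ℝ)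
    (hu : ∀ x t, u x t = 4 * arctan (c⁻¹ * Real.sin (γ * c * t) * (1 / Real.cosh (γ * x)))) :
    ∀ x t : ℝ,
      deriv (deriv (fun s => u x s)) t =
        deriv (deriv (fun y => u y t)) x - Real.sin (u x t) := by
  intro x t
  have hw : (0:ℝ) < 1 + c ^ 2 := by positivity
  have hγ2 : γ ^ 2 = 1 / (1 + c ^ 2) := by
    rw [hγ, div_pow, one_pow, Real.sq_sqrt hw.le]
  have hchpos : 0 < Real.cosh (γ * x) := Real.cosh_pos _
  have hchne : Real.cosh (γ * x) ≠ 0 := hchpos.ne'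
  have hpy : Real.sin (γ * c * t) ^ 2 + Real.cos (γ * c * t) ^ 2 = 1 :=
    Real.sin_sq_add_cos_sq _
  have hhyp : Real.cosh (γ * x) ^ 2 - Real.sinh (γ * x) ^ 2 = 1 :=
    Real.cosh_sq_sub_sinh_sq _
  -- linear inner derivative
  have hlin : ∀ s : ℝ, HasDerivAt (fun s : ℝ => γ * c * s) (γ * c) s := fun s => by
    simpa using (hasDerivAt_id s).const_mul (γ * c)
  have hlinx : ∀ y : ℝ, HasDerivAt (fun y : ℝ => γ * y) γ y := fun y => by
    simpa using (hasDerivAt_id y).const_mul γ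
  -- t-direction first derivative
  have hfunt : (fun s => u x s)
      = fun s => 4 * Real.arctan (c⁻¹ * Real.sin (γ * c * s) * (1 / Real.cosh (γ * x))) :=
    funext fun s => hu x s
  have hg1 : ∀ s : ℝ, HasDerivAt
      (fun s => 4 * Real.arctan (c⁻¹ * Real.sin (γ * c * s) * (1 / Real.cosh (γ * x))))
      (4 * γ * c ^ 2 * Real.cosh (γ * x) * Real.cos (γ * c * s)
        / (c ^ 2 * Real.cosh (γ * x) ^ 2 + Real.sin (γ * c * s) ^ 2)) s := by
    intro s
    have h := ((((hlin s).sin.const_mul c⁻¹).mul_const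
      (1 / Real.cosh (γ * x))).arctan).const_mul 4
    refine h.congr_deriv (Eq.symm ?_)
    have h1 : (1 + (c⁻¹ * Real.sin (γ * c * s) * (1 / Real.cosh (γ * x))) ^ 2) ≠ 0 := by
      positivity
    have h2 : c ^ 2 * Real.cosh (γ * x) ^ 2 + Real.sin (γ * c * s) ^ 2 ≠ 0 := by positivity
    field_simp
  have hD1t : deriv (fun s => u x s)
      = fun s => 4 * γ * c ^ 2 * Real.cosh (γ * x) * Real.cos (γ * c * s)
        / (c ^ 2 * Real.cosh (γ * x) ^ 2 + Real.sin (γ * c * s) ^ 2) := by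
    rw [hfunt]; exact funext fun s => (hg1 s).deriv
  -- t-direction second derivative
  have hDtpos : 0 < c ^ 2 * Real.cosh (γ * x) ^ 2 + Real.sin (γ * c * t) ^ 2 := by positivity
  have hnumt : HasDerivAt
      (fun s => 4 * γ * c ^ 2 * Real.cosh (γ * x) * Real.cos (γ * c * s))
      (4 * γ * c ^ 2 * Real.cosh (γ * x) * (-Real.sin (γ * c * t) * (γ * c))) t :=
    (hlin t).cos.const_mul _
  have hdent : HasDerivAt
      (fun s => c ^ 2 * Real.cosh (γ * x) ^ 2 + Real.sin (γ * c * s) ^ 2)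
      (2 * Real.sin (γ * c * t) ^ 1 * (Real.cos (γ * c * t) * (γ * c))) t := by
    simpa using ((hlin t).sin.pow 2).const_add (c ^ 2 * Real.cosh (γ * x) ^ 2)
  have hg2 : HasDerivAt
      (fun s => 4 * γ * c ^ 2 * Real.cosh (γ * x) * Real.cos (γ * c * s)
        / (c ^ 2 * Real.cosh (γ * x) ^ 2 + Real.sin (γ * c * s) ^ 2))
      ((-(4 * (c ^ 3 / (1 + c ^ 2)) * Real.cosh (γ * x) * Real.sin (γ * c * t))
          * (c ^ 2 * Real.cosh (γ * x) ^ 2 + Real.sin (γ * c * t) ^ 2)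
        - 8 * (c ^ 3 / (1 + c ^ 2)) * Real.cosh (γ * x) * Real.sin (γ * c * t)
          * (1 - Real.sin (γ * c * t) ^ 2))
        / (c ^ 2 * Real.cosh (γ * x) ^ 2 + Real.sin (γ * c * t) ^ 2) ^ 2) t := by
    have h := hnumt.div hdent hDtpos.ne'
    refine h.congr_deriv (Eq.symm ?_)
    linear_combination
      ((4*c^3*Real.cosh (γ*x)*Real.sin (γ*c*t)*(c^2*Real.cosh (γ*x)^2+Real.sin (γ*c*t)^2)
        + 8*c^3*Real.cosh (γ*x)*Real.sin (γ*c*t)*Real.cos (γ*c*t)^2)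
        /(c^2*Real.cosh (γ*x)^2+Real.sin (γ*c*t)^2)^2) * hγ2
      + (8*c^3*Real.cosh (γ*x)*Real.sin (γ*c*t)/(1+c^2)
        /(c^2*Real.cosh (γ*x)^2+Real.sin (γ*c*t)^2)^2) * hpy
  -- x-direction first derivative
  have hfunx : (fun y => u y t)
      = fun y => 4 * Real.arctan (c⁻¹ * Real.sin (γ * c * t) * (1 / Real.cosh (γ * y))) :=
    funext fun y => hu y t
  have hinv : ∀ y : ℝ, HasDerivAt (fun y : ℝ => 1 / Real.cosh (γ * y))
      (-(Real.sinh (γ * y) * γ) / Real.cosh (γ * y) ^ 2) y := fun y => by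
    simp only [one_div]; exact ((hlinx y).cosh).inv (Real.cosh_pos _).ne'
  have hh1 : ∀ y : ℝ, HasDerivAt
      (fun y => 4 * Real.arctan (c⁻¹ * Real.sin (γ * c * t) * (1 / Real.cosh (γ * y))))
      (-4 * (c⁻¹ * Real.sin (γ * c * t)) * γ * Real.sinh (γ * y)
        / (Real.cosh (γ * y) ^ 2 + (c⁻¹ * Real.sin (γ * c * t)) ^ 2)) y := by
    intro y
    have h := (((hinv y).const_mul (c⁻¹ * Real.sin (γ * c * t))).arctan).const_mul 4
    refine h.congr_deriv (Eq.symm ?_)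
    have h1 : (1 + (c⁻¹ * Real.sin (γ * c * t) * (1 / Real.cosh (γ * y))) ^ 2) ≠ 0 := by
      positivity
    have h2 : Real.cosh (γ * y) ^ 2 + (c⁻¹ * Real.sin (γ * c * t)) ^ 2 ≠ 0 := by positivity
    have h3 : Real.cosh (γ * y) ≠ 0 := (Real.cosh_pos _).ne'
    field_simp
  have hD1x : deriv (fun y => u y t)
      = fun y => -4 * (c⁻¹ * Real.sin (γ * c * t)) * γ * Real.sinh (γ * y)
        / (Real.cosh (γ * y) ^ 2 + (c⁻¹ * Real.sin (γ * c * t)) ^ 2) := by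
    rw [hfunx]; exact funext fun y => (hh1 y).deriv
  -- x-direction second derivative
  have hDxpos : 0 < Real.cosh (γ * x) ^ 2 + (c⁻¹ * Real.sin (γ * c * t)) ^ 2 := by positivity
  have hnumx : HasDerivAt
      (fun y => -4 * (c⁻¹ * Real.sin (γ * c * t)) * γ * Real.sinh (γ * y))
      (-4 * (c⁻¹ * Real.sin (γ * c * t)) * γ * (Real.cosh (γ * x) * γ)) x :=
    (hlinx x).sinh.const_mul _
  have hdenx : HasDerivAt
      (fun y => Real.cosh (γ * y) ^ 2 + (c⁻¹ * Real.sin (γ * c * t)) ^ 2)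
      (2 * Real.cosh (γ * x) ^ 1 * (Real.sinh (γ * x) * γ)) x := by
    simpa using ((hlinx x).cosh.pow 2).add_const ((c⁻¹ * Real.sin (γ * c * t)) ^ 2)
  have hh2 : HasDerivAt
      (fun y => -4 * (c⁻¹ * Real.sin (γ * c * t)) * γ * Real.sinh (γ * y)
        / (Real.cosh (γ * y) ^ 2 + (c⁻¹ * Real.sin (γ * c * t)) ^ 2))
      ((-(4 * (c⁻¹ * Real.sin (γ * c * t)) * (1 / (1 + c ^ 2)) * Real.cosh (γ * x))
          * (Real.cosh (γ * x) ^ 2 + (c⁻¹ * Real.sin (γ * c * t)) ^ 2)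
        + 8 * (c⁻¹ * Real.sin (γ * c * t)) * (1 / (1 + c ^ 2)) * Real.cosh (γ * x)
          * (Real.cosh (γ * x) ^ 2 - 1))
        / (Real.cosh (γ * x) ^ 2 + (c⁻¹ * Real.sin (γ * c * t)) ^ 2) ^ 2) x := by
    have h := hnumx.div hdenx hDxpos.ne'
    refine h.congr_deriv (Eq.symm ?_)
    linear_combination
      ((4*(c⁻¹*Real.sin (γ*c*t))*Real.cosh (γ*x)
          *(Real.cosh (γ*x)^2+(c⁻¹*Real.sin (γ*c*t))^2)
        - 8*(c⁻¹*Real.sin (γ*c*t))*Real.cosh (γ*x)*Real.sinh (γ*x)^2)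
        /(Real.cosh (γ*x)^2+(c⁻¹*Real.sin (γ*c*t))^2)^2) * hγ2
      + (8*(c⁻¹*Real.sin (γ*c*t))*Real.cosh (γ*x)/(1+c^2)
        /(Real.cosh (γ*x)^2+(c⁻¹*Real.sin (γ*c*t))^2)^2) * hhyp
  rw [hD1t, hg2.deriv, hD1x, hh2.deriv, hu x t, sin_four_arctan]
  have h1 : (1 + (c⁻¹ * Real.sin (γ * c * t) * (1 / Real.cosh (γ * x))) ^ 2) ≠ 0 := by
    positivity
  field_simp
  ring
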